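/- Let 𝔄 be a pre-left Hilbert algebra with completion H, and let K ⊆ H be the closed real-linear span of elements of the form a#a for a ∈ 𝔄 (with H regarded as a real Hilbert space via the real part of the inner product). If the right Hilbert algebra 𝔄' (the set of right bounded vectors v admitting v♭ with π'(v♭) = π'(v)*) is dense in H, then K ∩ iK = {0}. -/

import Mathlib

open ContinuousLinearMap


/-- Let `A` be a pre-left Hilbert algebra (dense subspace of a complex
Hilbert space `H` with left regular representation `π` and involution `s`), and let
`K` be the closed real-linear span of the elements `a# a = π(a#) a`.  If the right
Hilbert algebra `A'` (the set of right bounded vectors `v` admitting `v♭` with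
`π'(v♭) = π'(v)*`) is dense in `H`, then `K ∩ iK = {0}`. -/
theorem stmt3 {H : Type*} [NormedAddCommGroup H] [InnerProductSpace ℂ H] [CompleteSpace H]
    (A : Submodule ℂ H) (hA : Dense (A : Set H))
    (π : A → (H →L[ℂ] H)) (s : A → A)
    (hsinv : ∀ a : A, s (s a) = a)
    (hstar : ∀ (a : A) (v w : H), (inner ℂ (π a v) w : ℂ) = inner ℂ v (π (s a) w))
    (K : Submodule ℝ H)
    (hK : K = (Submodule.span ℝ {x : H | ∃ a : A, x = π (s a) (a : H)}).topologicalClosure)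
    -- density of the right Hilbert algebra A'
    (hdense : Dense {v : H | ∃ (v' : H) (Tv Tv' : H →L[ℂ] H),
        (∀ a : A, Tv a = π a v) ∧ (∀ a : A, Tv' a = π a v') ∧
          Tv' = ContinuousLinearMap.adjoint Tv}) :
    ∀ v : H, v ∈ K → (∃ w, w ∈ K ∧ v = Complex.I • w) → v = 0 := by
  intro u hu hiu
  obtain ⟨w, hw, huw⟩ := hiu
  -- real-linear continuous functionals
  set Ref : H → H →L[ℝ] ℝ :=
    fun c => Complex.reCLM.comp ((innerSL ℂ c).restrictScalars ℝ) with hRef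
  set Imf : H → H →L[ℝ] ℝ :=
    fun c => Complex.imCLM.comp ((innerSL ℂ c).restrictScalars ℝ) with hImf
  have hRefApp : ∀ c x : H, Ref c x = Complex.re (inner ℂ c x) := fun c x => rfl
  have hImfApp : ∀ c x : H, Imf c x = Complex.im (inner ℂ c x) := fun c x => rfl
  -- key: Re ⟪u, v⟫ = 0 for all v in the dense set
  have main : ∀ x ∈ {v : H | ∃ (v' : H) (Tv Tv' : H →L[ℂ] H),
        (∀ a : A, Tv a = π a v) ∧ (∀ a : A, Tv' a = π a v') ∧
          Tv' = ContinuousLinearMap.adjoint Tv}, Ref u x = 0 := by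
    rintro v ⟨v', Tv, Tv', h1, h2, h3⟩
    -- inner products with generators
    have gen : ∀ a : A, (inner ℂ (π (s a) (a : H)) v : ℂ) = inner ℂ (a : H) (Tv a) ∧
        (inner ℂ (π (s a) (a : H)) v' : ℂ) = starRingEnd ℂ (inner ℂ (a : H) (Tv a)) := by
      intro a
      constructor
      · rw [hstar (s a) (a : H) v, hsinv, h1]
      · rw [hstar (s a) (a : H) v', hsinv, ← h2, h3,
          ContinuousLinearMap.adjoint_inner_right, inner_conj_symm]
    -- K ⊆ ker (Ref (v - v'))
    have claim1 : K ≤ LinearMap.ker ((Ref (v - v') : H →ₗ[ℝ] ℝ)) := by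
      rw [hK]
      apply Submodule.topologicalClosure_minimal
      · rw [Submodule.span_le]
        rintro x ⟨a, rfl⟩
        obtain ⟨e1, e2⟩ := gen a
        simp only [SetLike.mem_coe, LinearMap.mem_ker, ContinuousLinearMap.coe_coe, hRefApp]
        have : (inner ℂ (v - v') (π (s a) (a : H)) : ℂ) =
            starRingEnd ℂ ((inner ℂ (π (s a) (a : H)) v : ℂ) - inner ℂ (π (s a) (a : H)) v') := by
          rw [map_sub, inner_conj_symm, inner_conj_symm, inner_sub_left]
        have hc : (inner ℂ (Tv (a : H)) ((a : H)) : ℂ) =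
            starRingEnd ℂ (inner ℂ ((a : H)) (Tv (a : H))) := by rw [inner_conj_symm]
        rw [this, e1, e2]
        simp only [map_sub, Complex.sub_re, Complex.conj_conj, Complex.conj_re]
        ring
      · exact isClosed_ker (Ref (v - v'))
    -- K ⊆ ker (Imf (v + v'))
    have claim2 : K ≤ LinearMap.ker ((Imf (v + v') : H →ₗ[ℝ] ℝ)) := by
      rw [hK]
      apply Submodule.topologicalClosure_minimal
      · rw [Submodule.span_le]
        rintro x ⟨a, rfl⟩
        obtain ⟨e1, e2⟩ := gen a
        simp only [SetLike.mem_coe, LinearMap.mem_ker, ContinuousLinearMap.coe_coe, hImfApp]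
        have : (inner ℂ (v + v') (π (s a) (a : H)) : ℂ) =
            starRingEnd ℂ ((inner ℂ (π (s a) (a : H)) v : ℂ) + inner ℂ (π (s a) (a : H)) v') := by
          rw [map_add, inner_conj_symm, inner_conj_symm, inner_add_left]
        have hc : (inner ℂ (Tv (a : H)) ((a : H)) : ℂ) =
            starRingEnd ℂ (inner ℂ ((a : H)) (Tv (a : H))) := by rw [inner_conj_symm]
        rw [this, e1, e2]
        simp only [map_add, Complex.add_im, Complex.conj_conj, Complex.conj_im]
        ring
      · exact isClosed_ker (Imf (v + v'))
    have c1 : Complex.re (inner ℂ (v - v') u : ℂ) = 0 := claim1 hu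
    have c2 : Complex.im (inner ℂ (v + v') w : ℂ) = 0 := claim2 hw
    have c3 : Complex.re (inner ℂ (v + v') u : ℂ) = 0 := by
      rw [huw, inner_smul_right]
      simp [Complex.mul_re, c2]
    rw [hRefApp]
    have : (inner ℂ u v : ℂ) = starRingEnd ℂ (inner ℂ v u) := (inner_conj_symm _ _).symm
    rw [this, Complex.conj_re]
    have hsum : (inner ℂ (v - v') u : ℂ) + inner ℂ (v + v') u = 2 * inner ℂ v u := by
      rw [inner_sub_left, inner_add_left]; ring
    have := congrArg Complex.re hsum
    rw [Complex.add_re, c1, c3] at this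
    have h2re : (2 * (inner ℂ v u : ℂ)).re = 2 * Complex.re (inner ℂ v u) := by
      simp [Complex.mul_re]
    rw [h2re] at this
    linarith
  -- by density, Ref u = 0 everywhere
  have hall : ∀ x : H, Ref u x = 0 := by
    have : Set.EqOn (Ref u) (fun _ => (0 : ℝ)) _ := main
    have heq := Set.EqOn.closure this (Ref u).continuous continuous_const
    intro x
    exact heq (by rw [hdense.closure_eq]; trivial)
  have h := hall u
  rw [hRefApp] at h
  have hn : (inner ℂ u u : ℂ) = ((‖u‖ : ℂ)) ^ 2 := inner_self_eq_norm_sq_to_K u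
  rw [hn] at h
  have : ‖u‖ ^ 2 = 0 := by simpa [← Complex.ofReal_pow] using h
  have : ‖u‖ = 0 := by nlinarith [norm_nonneg u]
  exact norm_eq_zero.mp this
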